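/- Any two distinct dual grids of W(q) intersect in an even number of points; consequently the code D spanned by characteristic vectors of dual grids is self-orthogonal up to the claim D ⊆ D^⊥. -/

import Mathlib

open scoped Classical
open Module

noncomputable section

variable (F : Type) [Field F] [Fintype F]

abbrev V4 := Fin 4 → F

def IsPt (p : Submodule F (V4 F)) : Prop := finrank F p = 1

def IsLn (L : Submodule F (V4 F)) : Prop := finrank F L = 2

def ptsOn (L : Submodule F (V4 F)) : Set (Submodule F (V4 F)) :=
  {p | IsPt F p ∧ p ≤ L}

def Coll3 (p r s : Submodule F (V4 F)) : Prop :=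
  ∃ L, IsLn F L ∧ p ≤ L ∧ r ≤ L ∧ s ≤ L

def IsOvoid (q : ℕ) (O : Set (Submodule F (V4 F))) : Prop :=
  (∀ p ∈ O, IsPt F p) ∧ O.ncard = q ^ 2 + 1 ∧
    ∀ p ∈ O, ∀ r ∈ O, ∀ s ∈ O, p ≠ r → p ≠ s → r ≠ s → ¬ Coll3 F p r s

def TotIso (B : LinearMap.BilinForm F (V4 F)) (L : Submodule F (V4 F)) : Prop :=
  IsLn F L ∧ ∀ x ∈ L, ∀ y ∈ L, B x y = 0

def Pt := {p : Submodule F (V4 F) // IsPt F p}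

def chi (s : Set (Submodule F (V4 F))) : Pt F → ZMod 2 :=
  fun p => if p.1 ∈ s then 1 else 0

def commonTangents (q : ℕ) (θ : Fin (q + 1) → Set (Submodule F (V4 F))) :
    Set (Submodule F (V4 F)) :=
  {L | IsLn F L ∧ ∀ i, (θ i ∩ ptsOn F L).ncard = 1}

def gridSet (B : LinearMap.BilinForm F (V4 F)) (m : Submodule F (V4 F)) :
    Set (Submodule F (V4 F)) :=
  ptsOn F m ∪ ptsOn F (LinearMap.BilinForm.orthogonal B m)

def lineCode (B : LinearMap.BilinForm F (V4 F)) :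
    Submodule (ZMod 2) (Pt F → ZMod 2) :=
  Submodule.span (ZMod 2) {w | ∃ L, TotIso F B L ∧ w = chi F (ptsOn F L)}

def gridCode (B : LinearMap.BilinForm F (V4 F)) :
    Submodule (ZMod 2) (Pt F → ZMod 2) :=
  Submodule.span (ZMod 2)
    {w | ∃ m, IsLn F m ∧ ¬ (∀ x ∈ m, ∀ y ∈ m, B x y = 0) ∧ w = chi F (gridSet F B m)}

instance : Fintype (Submodule F (V4 F)) :=
  Fintype.ofInjective (fun p => (p : Set (V4 F))) SetLike.coe_injective

instance : Fintype (Pt F) := by unfold Pt; infer_instance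

lemma dim4 : finrank F (V4 F) = 4 := by simp [V4]

lemma pt_eq_of_le {p W : Submodule F (V4 F)} (hp : IsPt F p) (hW : finrank F W ≤ 1)
    (h : p ≤ W) : p = W :=
  Submodule.eq_of_le_of_finrank_le h (by rw [hp]; exact hW)

lemma ptsOn_inter (X Y : Submodule F (V4 F)) :
    ptsOn F X ∩ ptsOn F Y = ptsOn F (X ⊓ Y) := by
  ext p; simp only [ptsOn, Set.mem_inter_iff, Set.mem_setOf_eq, le_inf_iff]; tauto

lemma ptsOn_bot : ptsOn F ⊥ = ∅ := by
  ext p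
  simp only [ptsOn, Set.mem_setOf_eq, Set.mem_empty_iff_false, iff_false, not_and,
    le_bot_iff]
  rintro hp rfl
  simp [IsPt] at hp

lemma ptsOn_mono {X Y : Submodule F (V4 F)} (h : X ≤ Y) : ptsOn F X ⊆ ptsOn F Y :=
  fun p hp => ⟨hp.1, hp.2.trans h⟩

lemma ptsOn_ncard_of_le_one {W : Submodule F (V4 F)} (hW : finrank F W ≤ 1) :
    (ptsOn F W).ncard = finrank F W := by
  interval_cases h : finrank F W
  · have : W = ⊥ := Submodule.finrank_eq_zero.mp h
    rw [this, ptsOn_bot]; simp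
  · have : ptsOn F W = {W} := by
      ext p
      simp only [ptsOn, Set.mem_setOf_eq, Set.mem_singleton_iff]
      constructor
      · rintro ⟨hp, hle⟩; exact pt_eq_of_le F hp h.le hle
      · rintro rfl; exact ⟨h, le_rfl⟩
    rw [this]; simp

set_option linter.unusedSectionVars false

open LinearMap.BilinForm in
lemma orth_sup (B : LinearMap.BilinForm F (V4 F)) (X Y : Submodule F (V4 F)) :
    B.orthogonal (X ⊔ Y) = B.orthogonal X ⊓ B.orthogonal Y := by
  ext v
  simp only [mem_orthogonal_iff, Submodule.mem_inf]
  constructor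
  · intro h
    exact ⟨fun n hn => h n (Submodule.mem_sup_left hn),
           fun n hn => h n (Submodule.mem_sup_right hn)⟩
  · rintro ⟨h1, h2⟩ n hn
    rcases Submodule.mem_sup.mp hn with ⟨a, ha, b, hb, rfl⟩
    have : B (a + b) v = B a v + B b v := by simp
    rw [this, h1 a ha, h2 b hb, add_zero]

open LinearMap.BilinForm in
lemma finrank_orth (B : LinearMap.BilinForm F (V4 F)) (hnd : B.Nondegenerate)
    (hr : B.IsRefl) (W : Submodule F (V4 F)) :
    finrank F (B.orthogonal W) = 4 - finrank F W := by
  rw [finrank_orthogonal hnd, dim4]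

open LinearMap.BilinForm in
lemma finrank_inf_eq_orth (B : LinearMap.BilinForm F (V4 F)) (hnd : B.Nondegenerate)
    (hr : B.IsRefl) {L L' : Submodule F (V4 F)} (hL : IsLn F L) (hL' : IsLn F L') :
    finrank F (L ⊓ L' : Submodule F (V4 F)) =
      finrank F (B.orthogonal L ⊓ B.orthogonal L' : Submodule F (V4 F)) := by
  rw [← orth_sup, finrank_orth F B hnd hr]
  have h1 := Submodule.finrank_sup_add_finrank_inf_eq L L'
  have h2 : finrank F (L ⊔ L' : Submodule F (V4 F)) ≤ 4 := by
    have := Submodule.finrank_le (L ⊔ L')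
    rwa [dim4 F] at this
  rw [hL, hL'] at h1
  omega

-- non-isotropic line meets its orthogonal trivially
open LinearMap.BilinForm in
lemma inf_orth_bot (B : LinearMap.BilinForm F (V4 F)) (halt : ∀ v, B v v = 0)
    (hr : B.IsRefl) {m : Submodule F (V4 F)} (hm : IsLn F m)
    (hmni : ¬ ∀ x ∈ m, ∀ y ∈ m, B x y = 0) :
    m ⊓ B.orthogonal m = ⊥ := by
  by_contra hne
  apply hmni
  obtain ⟨v, hv, hv0⟩ := Submodule.exists_mem_ne_zero_of_ne_bot hne
  rw [Submodule.mem_inf] at hv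
  obtain ⟨hvm, hvo⟩ := hv
  -- B v y = 0 for all y ∈ m
  have hvy : ∀ y ∈ m, B v y = 0 := fun y hy => hr _ _ (hvo y hy)
  intro x hx y hy
  by_cases hxs : x ∈ Submodule.span F {v}
  · obtain ⟨c, rfl⟩ := Submodule.mem_span_singleton.mp hxs
    simp [hvy y hy]
  · -- span {v, x} = m
    have hx0 : x ≠ 0 := by rintro rfl; exact hxs (Submodule.zero_mem _)
    have hinf : Submodule.span F {v} ⊓ Submodule.span F {x} = ⊥ := by
      by_contra hib
      have hle : Submodule.span F {v} ⊓ Submodule.span F {x} ≤ Submodule.span F {x} :=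
        inf_le_right
      have h1 : 0 < finrank F (Submodule.span F {v} ⊓ Submodule.span F {x} :
          Submodule F (V4 F)) := by
        rcases Nat.eq_zero_or_pos _ with h | h
        · exact absurd (Submodule.finrank_eq_zero.mp h) hib
        · exact h
      have heq := Submodule.eq_of_le_of_finrank_le hle
        (by rw [finrank_span_singleton hx0]; omega)
      have : x ∈ Submodule.span F {v} := by
        have := heq ▸ (Submodule.mem_span_singleton_self x)
        exact (Submodule.mem_inf.mp this).1
      exact hxs this
    have hsp : Submodule.span F ({v, x} : Set (V4 F)) = m := by
      apply Submodule.eq_of_le_of_finrank_le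
      · rw [Submodule.span_le]
        rintro z (rfl | rfl)
        · exact hvm
        · exact hx
      · rw [hm]
        have : Submodule.span F ({v, x} : Set (V4 F)) =
            Submodule.span F {v} ⊔ Submodule.span F {x} := by
          rw [Submodule.span_insert]
        rw [this]
        have := Submodule.finrank_sup_add_finrank_inf_eq
          (Submodule.span F {v}) (Submodule.span F {x})
        rw [hinf, finrank_span_singleton hv0, finrank_span_singleton hx0] at this
        simp at this
        omega
    rw [← hsp] at hy
    obtain ⟨a, b, rfl⟩ := Submodule.mem_span_pair.mp hy
    have h1 : B x v = 0 := hvy x hx |> fun h => hr _ _ h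
    simp [h1, halt x]

lemma ptsOn_ncard_odd (hqe : Even (Fintype.card F)) {L : Submodule F (V4 F)} (hL : IsLn F L) :
    Odd ((ptsOn F L).ncard) := by
  classical
  set q := Fintype.card F with hq
  have hq2 : 2 ≤ q := Fintype.one_lt_card
  -- the finset of nonzero vectors of L
  set s : Finset (V4 F) := Finset.univ.filter (fun v => v ∈ L ∧ v ≠ 0) with hs
  set t : Finset (Submodule F (V4 F)) := Finset.univ.filter (fun p => p ∈ ptsOn F L) with ht
  have hcard_sub : ∀ (W : Submodule F (V4 F)),
      (Finset.univ.filter (fun v => v ∈ W)).card = q ^ finrank F W := by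
    intro W
    have h1 : (Finset.univ.filter (fun v => v ∈ W)).card = Fintype.card W := by
      rw [Fintype.card_subtype]
    rw [h1, card_eq_pow_finrank (K := F)]
  have hWcard : ∀ (W : Submodule F (V4 F)),
      (Finset.univ.filter (fun v => v ∈ W ∧ v ≠ 0)).card = q ^ finrank F W - 1 := by
    intro W
    have : Finset.univ.filter (fun v => v ∈ W ∧ v ≠ 0) =
        (Finset.univ.filter (fun v => v ∈ W)).erase 0 := by
      ext v
      simp only [Finset.mem_filter, Finset.mem_erase, Finset.mem_univ, true_and]
      tauto
    rw [this, Finset.card_erase_of_mem (by simp [Submodule.zero_mem]), hcard_sub]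
  have hmap : ∀ v ∈ s, Submodule.span F {v} ∈ t := by
    intro v hv
    rw [hs, Finset.mem_filter] at hv
    obtain ⟨-, hvL, hv0⟩ := hv
    rw [ht, Finset.mem_filter]
    refine ⟨Finset.mem_univ _, finrank_span_singleton hv0, ?_⟩
    rw [Submodule.span_le, Set.singleton_subset_iff]; exact hvL
  have hfib := Finset.card_eq_sum_card_fiberwise hmap
  have hfibval : ∀ p ∈ t, (s.filter (fun v => Submodule.span F {v} = p)).card = q - 1 := by
    intro p hp
    rw [ht, Finset.mem_filter] at hp
    obtain ⟨-, hpt, hpL⟩ := hp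
    have : s.filter (fun v => Submodule.span F {v} = p) =
        Finset.univ.filter (fun v => v ∈ p ∧ v ≠ 0) := by
      ext v
      simp only [hs, Finset.filter_filter, Finset.mem_filter, Finset.mem_univ, true_and]
      constructor
      · rintro ⟨⟨hvL, hv0⟩, rfl⟩
        exact ⟨Submodule.mem_span_singleton_self v, hv0⟩
      · rintro ⟨hvp, hv0⟩
        have hle : Submodule.span F {v} ≤ p := by
          rw [Submodule.span_le, Set.singleton_subset_iff]; exact hvp
        have heq : Submodule.span F {v} = p :=
          Submodule.eq_of_le_of_finrank_le hle
            (by rw [finrank_span_singleton hv0, hpt])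
        exact ⟨⟨hpL hvp, hv0⟩, heq⟩
    rw [this, hWcard, hpt, pow_one]
  rw [Finset.sum_congr rfl hfibval, Finset.sum_const, smul_eq_mul] at hfib
  have hscard : s.card = q ^ 2 - 1 := by rw [hs, hWcard, hL]
  have htn : t.card = (ptsOn F L).ncard := by
    rw [Set.ncard_eq_toFinset_card']
    congr 1
    ext p
    simp [ht, Set.mem_toFinset]
  rw [hscard, htn] at hfib
  -- q^2 - 1 odd, q - 1 odd ⇒ ncard odd
  have hodd2 : Odd (q ^ 2 - 1) :=
    Nat.Even.sub_odd (by nlinarith) (by rw [sq]; exact hqe.mul_right q) odd_one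
  have hodd1 : Odd (q - 1) := Nat.Even.sub_odd (by omega) hqe odd_one
  rw [hfib] at hodd2
  exact ((Nat.odd_mul).mp hodd2).1

lemma ptsOn_disjoint {X Y : Submodule F (V4 F)} (h : X ⊓ Y = ⊥) :
    Disjoint (ptsOn F X) (ptsOn F Y) := by
  rw [Set.disjoint_iff_inter_eq_empty, ptsOn_inter, h, ptsOn_bot]

open LinearMap.BilinForm in
lemma gridSet_orth (B : LinearMap.BilinForm F (V4 F)) (hnd : B.Nondegenerate)
    (hr : B.IsRefl) (m : Submodule F (V4 F)) :
    gridSet F B (B.orthogonal m) = gridSet F B m := by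
  rw [gridSet, gridSet, orthogonal_orthogonal hnd hr, Set.union_comm]

open LinearMap.BilinForm in
lemma grid_inter_even (B : LinearMap.BilinForm F (V4 F))
    (halt : ∀ v, B v v = 0) (hnd : B.Nondegenerate)
    {m m' : Submodule F (V4 F)} (hm : IsLn F m) (hm' : IsLn F m')
    (hmni : ¬ ∀ x ∈ m, ∀ y ∈ m, B x y = 0)
    (hm'ni : ¬ ∀ x ∈ m', ∀ y ∈ m', B x y = 0)
    (hne : gridSet F B m ≠ gridSet F B m') :
    Even ((gridSet F B m ∩ gridSet F B m').ncard) := by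
  have hr : B.IsRefl := LinearMap.IsAlt.isRefl halt
  set mo := B.orthogonal m with hmo
  set m'o := B.orthogonal m' with hm'o
  have hmo_ln : IsLn F mo := by rw [IsLn, hmo, finrank_orth F B hnd hr, hm]
  have hm'o_ln : IsLn F m'o := by rw [IsLn, hm'o, finrank_orth F B hnd hr, hm']
  have homo : B.orthogonal mo = m := by rw [hmo, orthogonal_orthogonal hnd hr]
  have hom'o : B.orthogonal m'o = m' := by rw [hm'o, orthogonal_orthogonal hnd hr]
  -- distinctness
  have h1 : m ≠ m' := fun h => hne (by rw [h])
  have h2 : m ≠ m'o := by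
    intro h
    exact hne (by rw [h, hm'o, gridSet_orth F B hnd hr])
  have h3 : mo ≠ m' := by
    intro h
    exact h2 (by rw [← homo, h, ← hm'o])
  have h4 : mo ≠ m'o := by
    intro h
    exact h1 (by rw [← homo, h, hom'o])
  -- finrank of intersections of distinct lines
  have hle1 : ∀ X Y : Submodule F (V4 F), IsLn F X → IsLn F Y → X ≠ Y →
      finrank F (X ⊓ Y : Submodule F (V4 F)) ≤ 1 := by
    intro X Y hX hY hXY
    by_contra h
    push_neg at h
    have e1 : X ⊓ Y = X := Submodule.eq_of_le_of_finrank_le inf_le_left (by rw [hX]; omega)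
    have e2 : X ⊓ Y = Y := Submodule.eq_of_le_of_finrank_le inf_le_right (by rw [hY]; omega)
    exact hXY (e1 ▸ e2)
  -- intersections come in equal pairs
  have had : finrank F (m ⊓ m' : Submodule F (V4 F)) =
      finrank F (mo ⊓ m'o : Submodule F (V4 F)) :=
    finrank_inf_eq_orth F B hnd hr hm hm'
  have hbc : finrank F (m ⊓ m'o : Submodule F (V4 F)) =
      finrank F (mo ⊓ m' : Submodule F (V4 F)) := by
    have := finrank_inf_eq_orth F B hnd hr hm hm'o_ln
    rwa [hom'o] at this
  -- decompose the intersection of the two grids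
  have hset : gridSet F B m ∩ gridSet F B m' =
      ((ptsOn F (m ⊓ m') ∪ ptsOn F (m ⊓ m'o)) ∪ ptsOn F (mo ⊓ m')) ∪ ptsOn F (mo ⊓ m'o) := by
    ext x
    simp only [gridSet, Set.mem_inter_iff, Set.mem_union, ← ptsOn_inter, Set.mem_inter_iff,
      ← hmo, ← hm'o]
    tauto
  have hbotm : m ⊓ mo = ⊥ := inf_orth_bot F B halt hr hm hmni
  have hbotm' : m' ⊓ m'o = ⊥ := inf_orth_bot F B halt hr hm' hm'ni
  -- disjointness
  have dAB : Disjoint (ptsOn F (m ⊓ m')) (ptsOn F (m ⊓ m'o)) :=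
    (ptsOn_disjoint F hbotm').mono (ptsOn_mono F inf_le_right) (ptsOn_mono F inf_le_right)
  have dAC : Disjoint (ptsOn F (m ⊓ m')) (ptsOn F (mo ⊓ m')) :=
    (ptsOn_disjoint F hbotm).mono (ptsOn_mono F inf_le_left) (ptsOn_mono F inf_le_left)
  have dBC : Disjoint (ptsOn F (m ⊓ m'o)) (ptsOn F (mo ⊓ m')) :=
    (ptsOn_disjoint F hbotm).mono (ptsOn_mono F inf_le_left) (ptsOn_mono F inf_le_left)
  have dAD : Disjoint (ptsOn F (m ⊓ m')) (ptsOn F (mo ⊓ m'o)) :=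
    (ptsOn_disjoint F hbotm).mono (ptsOn_mono F inf_le_left) (ptsOn_mono F inf_le_left)
  have dBD : Disjoint (ptsOn F (m ⊓ m'o)) (ptsOn F (mo ⊓ m'o)) :=
    (ptsOn_disjoint F hbotm).mono (ptsOn_mono F inf_le_left) (ptsOn_mono F inf_le_left)
  have dCD : Disjoint (ptsOn F (mo ⊓ m')) (ptsOn F (mo ⊓ m'o)) :=
    (ptsOn_disjoint F hbotm').mono (ptsOn_mono F inf_le_right) (ptsOn_mono F inf_le_right)
  have dABC : Disjoint (ptsOn F (m ⊓ m') ∪ ptsOn F (m ⊓ m'o)) (ptsOn F (mo ⊓ m')) :=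
    Set.disjoint_union_left.mpr ⟨dAC, dBC⟩
  have dABCD : Disjoint ((ptsOn F (m ⊓ m') ∪ ptsOn F (m ⊓ m'o)) ∪ ptsOn F (mo ⊓ m'))
      (ptsOn F (mo ⊓ m'o)) := by
    rw [Set.disjoint_union_left, Set.disjoint_union_left]
    exact ⟨⟨dAD, dBD⟩, dCD⟩
  rw [hset, Set.ncard_union_eq dABCD (Set.toFinite _) (Set.toFinite _),
    Set.ncard_union_eq dABC (Set.toFinite _) (Set.toFinite _),
    Set.ncard_union_eq dAB (Set.toFinite _) (Set.toFinite _),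
    ptsOn_ncard_of_le_one F (hle1 _ _ hm hm' h1),
    ptsOn_ncard_of_le_one F (hle1 _ _ hm hm'o_ln h2),
    ptsOn_ncard_of_le_one F (hle1 _ _ hmo_ln hm' h3),
    ptsOn_ncard_of_le_one F (hle1 _ _ hmo_ln hm'o_ln h4)]
  exact ⟨finrank F (m ⊓ m' : Submodule F (V4 F)) +
    finrank F (m ⊓ m'o : Submodule F (V4 F)), by omega⟩

lemma even_cast_zmod2 {k : ℕ} (h : Even k) : (k : ZMod 2) = 0 := by
  rw [ZMod.natCast_eq_zero_iff]
  exact even_iff_two_dvd.mp h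

lemma chi_pair (S T : Set (Submodule F (V4 F))) (hST : ∀ x ∈ S ∩ T, IsPt F x) :
    ∑ p : Pt F, chi F S p * chi F T p = ((S ∩ T).ncard : ZMod 2) := by
  have h1 : ∀ p : Pt F, chi F S p * chi F T p =
      if p.1 ∈ S ∩ T then (1 : ZMod 2) else 0 := by
    intro p
    by_cases h : p.1 ∈ S <;> by_cases h2 : p.1 ∈ T <;>
      simp [chi, h, h2, Set.mem_inter_iff]
  rw [Finset.sum_congr rfl (fun p _ => h1 p), Finset.sum_boole]
  congr 1
  rw [← Fintype.card_subtype, Set.ncard_eq_toFinset_card', Set.toFinset_card]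
  apply Fintype.card_congr
  exact {
    toFun := fun x => ⟨x.1.1, x.2⟩
    invFun := fun y => ⟨⟨y.1, hST y.1 y.2⟩, y.2⟩
    left_inv := fun x => rfl
    right_inv := fun y => rfl }

lemma gridSet_pts (B : LinearMap.BilinForm F (V4 F)) (m : Submodule F (V4 F)) :
    ∀ x ∈ gridSet F B m, IsPt F x := by
  rintro x (hx | hx) <;> exact hx.1

open LinearMap.BilinForm in
lemma grid_self_even (B : LinearMap.BilinForm F (V4 F))
    (hqe : Even (Fintype.card F))
    (halt : ∀ v, B v v = 0) (hnd : B.Nondegenerate)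
    {m : Submodule F (V4 F)} (hm : IsLn F m)
    (hmni : ¬ ∀ x ∈ m, ∀ y ∈ m, B x y = 0) :
    Even ((gridSet F B m).ncard) := by
  have hr : B.IsRefl := LinearMap.IsAlt.isRefl halt
  have hmo_ln : IsLn F (B.orthogonal m) := by rw [IsLn, finrank_orth F B hnd hr, hm]
  have hd : Disjoint (ptsOn F m) (ptsOn F (B.orthogonal m)) :=
    ptsOn_disjoint F (inf_orth_bot F B halt hr hm hmni)
  rw [gridSet, Set.ncard_union_eq hd (Set.toFinite _) (Set.toFinite _)]
  exact (ptsOn_ncard_odd F hqe hm).add_odd (ptsOn_ncard_odd F hqe hmo_ln)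

theorem stmt19 (q : ℕ) (hq : Fintype.card F = q) (n : ℕ) (hqn : q = 2 ^ n)
    (B : LinearMap.BilinForm F (V4 F))
    (halt : ∀ v, B v v = 0) (hnd : B.Nondegenerate)
    (m m' : Submodule F (V4 F)) (hm : IsLn F m) (hm' : IsLn F m')
    (hmni : ¬ ∀ x ∈ m, ∀ y ∈ m, B x y = 0)
    (hm'ni : ¬ ∀ x ∈ m', ∀ y ∈ m', B x y = 0)
    (hne : gridSet F B m ≠ gridSet F B m') :
    Even ((gridSet F B m ∩ gridSet F B m').ncard) ∧
    ∀ u ∈ gridCode F B, ∀ w ∈ gridCode F B,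
      ∑ᶠ p : Pt F, u p * w p = 0 := by
  have hqe : Even (Fintype.card F) := by
    have h2 : 1 < Fintype.card F := Fintype.one_lt_card
    rw [hq, hqn] at *
    cases n with
    | zero => simp at h2
    | succ k => exact ⟨2 ^ k, by ring⟩
  refine ⟨grid_inter_even F B halt hnd hm hm' hmni hm'ni hne, ?_⟩
  set Φ : (Pt F → ZMod 2) → (Pt F → ZMod 2) → ZMod 2 :=
    fun u w => ∑ p : Pt F, u p * w p with hΦ
  set gens : Set (Pt F → ZMod 2) :=
    {w | ∃ m, IsLn F m ∧ ¬ (∀ x ∈ m, ∀ y ∈ m, B x y = 0) ∧ w = chi F (gridSet F B m)}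
    with hgens
  have key : ∀ u ∈ gens, ∀ w ∈ gens, Φ u w = 0 := by
    rintro u ⟨m₁, hm₁, hm₁ni, rfl⟩ w ⟨m₂, hm₂, hm₂ni, rfl⟩
    have hpts : ∀ x ∈ gridSet F B m₁ ∩ gridSet F B m₂, IsPt F x :=
      fun x hx => gridSet_pts F B m₁ x hx.1
    rw [hΦ]
    simp only
    rw [chi_pair F _ _ hpts]
    by_cases hgg : gridSet F B m₁ = gridSet F B m₂
    · rw [hgg, Set.inter_self]
      exact even_cast_zmod2 (grid_self_even F B hqe halt hnd hm₂ hm₂ni)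
    · exact even_cast_zmod2 (grid_inter_even F B halt hnd hm₁ hm₂ hm₁ni hm₂ni hgg)
  have hsymm : ∀ u w, Φ u w = Φ w u := by
    intro u w; simp only [hΦ]; exact Finset.sum_congr rfl fun p _ => mul_comm _ _
  have hzero : ∀ w, Φ 0 w = 0 := by intro w; simp [hΦ]
  have hadd : ∀ u v w, Φ (u + v) w = Φ u w + Φ v w := by
    intro u v w
    simp only [hΦ, Pi.add_apply, add_mul]
    exact Finset.sum_add_distrib
  have hsmul : ∀ (c : ZMod 2) u w, Φ (c • u) w = c * Φ u w := by
    intro c u w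
    simp only [hΦ, Pi.smul_apply, smul_eq_mul, mul_assoc]
    exact (Finset.mul_sum _ _ _).symm
  have step1 : ∀ w ∈ gens, ∀ u ∈ gridCode F B, Φ u w = 0 := by
    intro w hw u hu
    refine Submodule.span_induction (p := fun u _ => Φ u w = 0)
      (fun x hx => key x hx w hw) (hzero w) ?_ ?_ hu
    · intro x y _ _ hx hy
      rw [hadd, hx, hy, add_zero]
    · intro c x _ hx
      rw [hsmul, hx, mul_zero]
  have step2 : ∀ u ∈ gridCode F B, ∀ w ∈ gridCode F B, Φ u w = 0 := by
    intro u hu w hw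
    refine Submodule.span_induction (p := fun w _ => Φ u w = 0)
      (fun x hx => step1 x hx u hu) ?_ ?_ ?_ hw
    · show Φ u 0 = 0
      rw [hsymm, hzero]
    · intro x y _ _ hx hy
      show Φ u (x + y) = 0
      rw [hsymm, hadd, hsymm x u, hsymm y u, hx, hy, add_zero]
    · intro c x _ hx
      show Φ u (c • x) = 0
      rw [hsymm, hsmul, hsymm x u, hx, mul_zero]
  intro u hu w hw
  rw [finsum_eq_sum_of_fintype]
  exact step2 u hu w hw
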